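/- Let b ≥ 2 and τ ∈ {τ^b_2, τ^b_3}, and let φ be an instance of cubic monotone one-in-three 3-SAT with m clauses. If φ has a one-in-three model, then there is a τ-region (sup, sig) of the translator T_τ such that sig(z) = 0 (the group event 0) and sig(k) = (0,1). -/

import Mathlib

/-! ## Transition systems -/

/-- A transition system over ambient state type `S` and event type `E`:
a set of states, a set of events, and a (deterministic or not) labeled
transition relation whose transitions stay inside the state/event sets. -/
structure TS (S E : Type) where
  states : Set S
  events : Set E
  tr : S → E → S → Prop
  tr_mem : ∀ ⦃s e s'⦄, tr s e s' → s ∈ states ∧ e ∈ events ∧ s' ∈ states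

/-- Event `e` occurs at state `s`. -/
def TS.occurs {S E : Type} (A : TS S E) (e : E) (s : S) : Prop := ∃ s', A.tr s e s'

/-! ## The types of nets `τ^b_t`, `t ∈ {0,1,2,3}` -/

/-- Events of the types of nets: pairs `(m,n)` or group events `c ∈ ℤ_{b+1}`. -/
inductive Tev where
  | pr (m n : ℕ)
  | gr (c : ℕ)
deriving DecidableEq

def Tev.minus : Tev → ℕ | .pr m _ => m | .gr _ => 0
def Tev.plus : Tev → ℕ | .pr _ n => n | .gr _ => 0
def Tev.absv : Tev → ℕ | .pr _ _ => 0 | .gr c => c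

/-- Membership in the event set of the type `τ^b_t`:
for `t ∈ {1,3}` (pure types) the pair events `(m,n)` with `m,n ≥ 1` are discarded;
for `t ∈ {2,3}` the pair `(0,0)` is discarded and the group events `0,…,b` are present;
for `t ∈ {0,1}` there are no group events. -/
def tevOk (b t : ℕ) : Tev → Prop
  | .pr m n => m ≤ b ∧ n ≤ b ∧ ((t = 1 ∨ t = 3) → (m = 0 ∨ n = 0)) ∧
      ((t = 2 ∨ t = 3) → ¬(m = 0 ∧ n = 0))
  | .gr c => c ≤ b ∧ (t = 2 ∨ t = 3)

/-- The partial transition function of the types `τ^b_t` on the states `{0,…,b}`. -/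
def tevStep (b s : ℕ) : Tev → Option ℕ
  | .pr m n => if m ≤ s ∧ s - m + n ≤ b then some (s - m + n) else none
  | .gr c => some ((s + c) % (b + 1))

/-! ## Regions, ESSP and SSP -/

/-- A `τ^b_t`-region of a transition system `A`. -/
structure Region (b t : ℕ) {S E : Type} (A : TS S E) where
  sup : S → ℕ
  sig : E → Tev
  sup_le : ∀ s ∈ A.states, sup s ≤ b
  sig_ok : ∀ e ∈ A.events, tevOk b t (sig e)
  resp : ∀ ⦃s e s'⦄, A.tr s e s' → tevStep b (sup s) (sig e) = some (sup s')

/-- A region solves the ESSP atom `(e,s)` if `sig e` does not occur at `sup s` in `τ`. -/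
def Region.solvesESSP {b t : ℕ} {S E : Type} {A : TS S E} (R : Region b t A)
    (e : E) (s : S) : Prop :=
  tevStep b (R.sup s) (R.sig e) = none

/-- A region solves the SSP atom `(s,s')` if `sup s ≠ sup s'`. -/
def Region.solvesSSP {b t : ℕ} {S E : Type} {A : TS S E} (R : Region b t A)
    (s s' : S) : Prop :=
  R.sup s ≠ R.sup s'

/-- `A` has the `τ^b_t`-ESSP: every ESSP atom is solvable. -/
def TS.hasESSP (b t : ℕ) {S E : Type} (A : TS S E) : Prop :=
  ∀ e ∈ A.events, ∀ s ∈ A.states, ¬ A.occurs e s → ∃ R : Region b t A, R.solvesESSP e s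

/-- `A` has the `τ^b_t`-SSP: every SSP atom is solvable. -/
def TS.hasSSP (b t : ℕ) {S E : Type} (A : TS S E) : Prop :=
  ∀ s ∈ A.states, ∀ s' ∈ A.states, s ≠ s' → ∃ R : Region b t A, R.solvesSSP s s'

/-- `A` is `τ^b_t`-feasible. -/
def TS.feasible (b t : ℕ) {S E : Type} (A : TS S E) : Prop :=
  A.hasESSP b t ∧ A.hasSSP b t

/-! ## Combinators: linear TSs, relabeled states, unions -/

/-- The linear TS given by the word `w`: states `0,…,w.length`, and an
`e`-labeled transition from `s` to `s+1` whenever `w[s] = e`. -/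
def TS.chain {E : Type} (w : List E) : TS ℕ E where
  states := {s | s ≤ w.length}
  events := {e | e ∈ w}
  tr s e s' := w[s]? = some e ∧ s' = s + 1
  tr_mem := by
    rintro s e s' ⟨h, rfl⟩
    have hs : s < w.length := by
      by_contra hc
      rw [List.getElem?_eq_none (Nat.le_of_not_lt hc)] at h
      cases h
    obtain ⟨hlt, rfl⟩ := List.getElem?_eq_some_iff.mp h
    exact ⟨Nat.le_of_lt hs, List.getElem_mem hlt, hs⟩

/-- Renaming the states of a TS along `f`. -/
def TS.mapStates {S S' E : Type} (f : S → S') (A : TS S E) : TS S' E where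
  states := f '' A.states
  events := A.events
  tr s e s' := ∃ a a', A.tr a e a' ∧ s = f a ∧ s' = f a'
  tr_mem := by
    rintro s e s' ⟨a, a', h, rfl, rfl⟩
    obtain ⟨h1, h2, h3⟩ := A.tr_mem h
    exact ⟨⟨a, h1, rfl⟩, h2, ⟨a', h3, rfl⟩⟩

/-- The union `U(A_i)_{i : ι}` of a family of TSs over the same ambient types. -/
def TS.unionFam {ι S E : Type} (F : ι → TS S E) : TS S E where
  states := ⋃ i, (F i).states
  events := ⋃ i, (F i).events
  tr s e s' := ∃ i, (F i).tr s e s'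
  tr_mem := by
    rintro s e s' ⟨i, h⟩
    obtain ⟨h1, h2, h3⟩ := (F i).tr_mem h
    exact ⟨Set.mem_iUnion.2 ⟨i, h1⟩, Set.mem_iUnion.2 ⟨i, h2⟩, Set.mem_iUnion.2 ⟨i, h3⟩⟩

/-- The SSP for a union: all SSP atoms given by distinct states of the *same*
constituent are solvable by regions of the union. -/
def unionSSP (b t : ℕ) {ι S E : Type} (F : ι → TS S E) : Prop :=
  ∀ i : ι, ∀ s ∈ (F i).states, ∀ s' ∈ (F i).states, s ≠ s' →
    ∃ R : Region b t (TS.unionFam F), R.solvesSSP s s'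
/-! ## Cubic monotone one-in-three 3-SAT -/

/-- An instance `φ = {C_0,…,C_{m-1}}` of cubic monotone one-in-three 3-SAT with
variables `V(φ) = {X_0,…,X_{m-1}}` (identified with `Fin m`): every clause
`C_i = {X_{i,0}, X_{i,1}, X_{i,2}}` consists of three distinct variables and every
variable occurs in exactly three clauses. -/
structure SatInstance (m : ℕ) where
  C : Fin m → Fin 3 → Fin m
  clause_distinct : ∀ i : Fin m, Function.Injective (C i)
  cubic : ∀ v : Fin m,
    (Finset.univ.filter (fun p : Fin m × Fin 3 => C p.1 p.2 = v)).card = 3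

/-- `M` is a one-in-three model of `φ`: every clause contains exactly one variable of `M`. -/
def SatInstance.model {m : ℕ} (φ : SatInstance m) (M : Set (Fin m)) : Prop :=
  ∀ i : Fin m, ∃! r : Fin 3, φ.C i r ∈ M

/-! ## Events of the gadgets -/

inductive Ev where
  | k | z | z0 | z1 | o0 | o1 | o2 | u
  | kj (j : ℕ)  -- the interface events k_j
  | x (i : ℕ)   -- the events x_i
  | p (i : ℕ)   -- the events p_i
  | vj (j : ℕ)  -- the events v_j
  | X (v : ℕ)   -- the variable events X_v
deriving DecidableEq

/-! ## The gadget TSs (states are pairs (tag, position)) -/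

/-- `H_0`, with `h_{0,i} = (0,i)`. -/
def H0 (b : ℕ) : TS (ℕ × ℕ) Ev :=
  (TS.chain (List.replicate b Ev.k ++ List.replicate b Ev.z ++ [Ev.o0] ++
    List.replicate b Ev.k ++ List.replicate b Ev.z ++ List.replicate b Ev.o1 ++
    List.replicate b Ev.k)).mapStates (fun i => (0, i))

/-- `H_1`, with `h_{1,i} = (0,i)`. -/
def H1 (b : ℕ) : TS (ℕ × ℕ) Ev :=
  (TS.chain (List.replicate b Ev.k ++ [Ev.z0, Ev.o0] ++ List.replicate b Ev.k ++
    [Ev.z1, Ev.z0, Ev.o2] ++ List.replicate b Ev.k)).mapStates (fun i => (0, i))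

/-- `H_2`, with `h_{2,i} = (0,i)`. -/
def H2 (b : ℕ) : TS (ℕ × ℕ) Ev :=
  (TS.chain (List.replicate b Ev.k ++ [Ev.o0] ++ List.replicate b Ev.k ++
    [Ev.o2] ++ List.replicate b Ev.k)).mapStates (fun i => (0, i))

/-- `D_{j,0}`, with `d_{j,0,i} = (j+1,i)`. -/
def D0 (b j : ℕ) : TS (ℕ × ℕ) Ev :=
  (TS.chain ([Ev.o0, Ev.kj j] ++ List.replicate (b+1) Ev.o1)).mapStates
    (fun i => (j + 1, i))

/-- `D_{j,1}`, with `d_{j,1,i} = (j+1,i)`. -/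
def D1 (b j : ℕ) : TS (ℕ × ℕ) Ev :=
  (TS.chain [Ev.o0, Ev.kj j, Ev.o2]).mapStates (fun i => (j + 1, i))

/-- The word of the gadget `T_{i,a}` (`a ∈ {0,1,2}`) of the translator `T`. -/
def Tword (b : ℕ) {m : ℕ} (φ : SatInstance m) (i : Fin m) (a : Fin 3) : List Ev :=
  if a = 0 then
    [Ev.kj (6 * (i : ℕ))] ++ List.replicate b (Ev.X ((φ.C i 0 : Fin m) : ℕ)) ++
    [Ev.x (i : ℕ)] ++ List.replicate b (Ev.X ((φ.C i 2 : Fin m) : ℕ)) ++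
    [Ev.kj (6 * (i : ℕ) + 1)]
  else if a = 1 then
    [Ev.kj (6 * (i : ℕ) + 2)] ++ List.replicate b (Ev.X ((φ.C i 1 : Fin m) : ℕ)) ++
    [Ev.p (i : ℕ), Ev.kj (6 * (i : ℕ) + 3)]
  else
    [Ev.kj (6 * (i : ℕ) + 4), Ev.x (i : ℕ), Ev.p (i : ℕ), Ev.kj (6 * (i : ℕ) + 5)]

/-- The gadget `T_{i,a}` of the translator `T`, with states `t_{i,a,pos} = (tag, pos)`. -/
def Tgad (b tag : ℕ) {m : ℕ} (φ : SatInstance m) (i : Fin m) (a : Fin 3) :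
    TS (ℕ × ℕ) Ev :=
  (TS.chain (Tword b φ i a)).mapStates (fun pos => (tag, pos))

/-- The translator `T = U(T_{0,0}, T_{0,1}, T_{0,2}, …, T_{m-1,2})` (standalone,
with `t_{i,a,pos} = (3i+a+1, pos)`). -/
def Ttrans (b : ℕ) {m : ℕ} (φ : SatInstance m) : TS (ℕ × ℕ) Ev :=
  TS.unionFam (fun q : Fin m × Fin 3 => Tgad b (3 * (q.1 : ℕ) + (q.2 : ℕ) + 1) φ q.1 q.2)

/-- `H_3`, with `h_{3,0,i} = (0,i)` and `h_{3,1,i} = (1,i)`: the union of the path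
`h_{3,0,0} --k^b--> h_{3,0,b}` and the path
`h_{3,0,0} --u--> h_{3,1,0} --k^{b-1}--> h_{3,1,b-1} --z--> h_{3,0,b}`. -/
def H3 (b : ℕ) : TS (ℕ × ℕ) Ev :=
  TS.unionFam (fun c : Bool =>
    if c then (TS.chain (List.replicate b Ev.k)).mapStates (fun i => (0, i))
    else (TS.chain ([Ev.u] ++ List.replicate (b-1) Ev.k ++ [Ev.z])).mapStates
      (fun i => if i = 0 then (0, 0) else if i = b + 1 then (0, b) else (1, i - 1)))

/-- The set `E_0 = {(m,m) : 1 ≤ m ≤ b} ∪ {0}`. -/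
def Ezero (b : ℕ) : Set Tev :=
  {e | (∃ q, 1 ≤ q ∧ q ≤ b ∧ e = Tev.pr q q) ∨ e = Tev.gr 0}

/-- The first row `f_{j,0,0} --k^b--> f_{j,0,b}` of `F_j`, with `f_{j,0,i} = (4j+2, i)`. -/
def Fch0 (b j : ℕ) : TS (ℕ × ℕ) Ev :=
  (TS.chain (List.replicate b Ev.k)).mapStates (fun i => (4 * j + 2, i))

/-- The second row `f_{j,0,0} --v_j--> f_{j,1,0} --k^{b-1}--> f_{j,1,b-1} --X_j--> f_{j,0,b}`
of `F_j`, with `f_{j,1,i} = (4j+3, i)`. -/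
def Fch1 (b j : ℕ) : TS (ℕ × ℕ) Ev :=
  (TS.chain ([Ev.vj j] ++ List.replicate (b-1) Ev.k ++ [Ev.X j])).mapStates
    (fun i => if i = 0 then (4 * j + 2, 0) else if i = b + 1 then (4 * j + 2, b)
      else (4 * j + 3, i - 1))

/-- `F_j` as the union of its two rows. -/
def Fgad (b j : ℕ) : TS (ℕ × ℕ) Ev :=
  TS.unionFam (fun c : Bool => if c then Fch0 b j else Fch1 b j)

/-- `G_j`, with `g_{j,i} = (4j+4, i)`. -/
def Ggad (b j : ℕ) : TS (ℕ × ℕ) Ev :=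
  (TS.chain (List.replicate b Ev.k ++ [Ev.X j])).mapStates (fun i => (4 * j + 4, i))

/-- The clause gadget `T_i` (of the translator for the group-extended types),
with `t_{i,pos} = (4i+5, pos)`. -/
def Tgad2 (b : ℕ) {m : ℕ} (φ : SatInstance m) (i : Fin m) : TS (ℕ × ℕ) Ev :=
  (TS.chain (List.replicate b Ev.k ++
    [Ev.X ((φ.C i 0 : Fin m) : ℕ), Ev.X ((φ.C i 1 : Fin m) : ℕ),
     Ev.X ((φ.C i 2 : Fin m) : ℕ), Ev.z] ++ List.replicate b Ev.k)).mapStates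
    (fun pos => (4 * (i : ℕ) + 5, pos))

/-- The translator `T_τ = U(F_0, G_0, …, F_{m-1}, G_{m-1}, T_0, …, T_{m-1})`
for the group-extended types. -/
def Ttrans2fam (b : ℕ) {m : ℕ} (φ : SatInstance m) : Fin m × Fin 3 → TS (ℕ × ℕ) Ev :=
  fun q => if q.2 = 0 then Fgad b (q.1 : ℕ)
    else if q.2 = 1 then Ggad b (q.1 : ℕ) else Tgad2 b φ q.1

def Ttrans2 (b : ℕ) {m : ℕ} (φ : SatInstance m) : TS (ℕ × ℕ) Ev :=
  TS.unionFam (Ttrans2fam b φ)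
/-! ## The key unions and the unions of key and translator -/

/-- The family of constituents of the key `K_{τ^b_0} = U(H_0, D_{0,0},…,D_{6m-1,0})`. -/
def K0fam (b m : ℕ) : Option (Fin (6 * m)) → TS (ℕ × ℕ) Ev
  | none => H0 b
  | some j => D0 b (j : ℕ)

def K0 (b m : ℕ) : TS (ℕ × ℕ) Ev := TS.unionFam (K0fam b m)

/-- The family of constituents of the key `K_{τ^b_1} = U(H_1, D_{0,1},…,D_{6m-1,1})`. -/
def K1fam (b m : ℕ) : Option (Fin (6 * m)) → TS (ℕ × ℕ) Ev
  | none => H1 b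
  | some j => D1 b (j : ℕ)

def K1 (b m : ℕ) : TS (ℕ × ℕ) Ev := TS.unionFam (K1fam b m)

/-- The family of constituents of the key `K = U(H_2, D_{0,1},…,D_{6m-1,1})`. -/
def K2fam (b m : ℕ) : Option (Fin (6 * m)) → TS (ℕ × ℕ) Ev
  | none => H2 b
  | some j => D1 b (j : ℕ)

def K2 (b m : ℕ) : TS (ℕ × ℕ) Ev := TS.unionFam (K2fam b m)

/-- The family of constituents of `U_{τ^b_0} = U(H_0, D_{0,0},…,D_{6m-1,0}, T)`. -/
def U0fam (b : ℕ) {m : ℕ} (φ : SatInstance m) :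
    Option (Fin (6 * m) ⊕ Fin m × Fin 3) → TS (ℕ × ℕ) Ev
  | none => H0 b
  | some (.inl j) => D0 b (j : ℕ)
  | some (.inr q) => Tgad b (6 * m + 1 + 3 * (q.1 : ℕ) + (q.2 : ℕ)) φ q.1 q.2

def U0 (b : ℕ) {m : ℕ} (φ : SatInstance m) : TS (ℕ × ℕ) Ev := TS.unionFam (U0fam b φ)

/-- The family of constituents of `U_{τ^b_1} = U(H_1, D_{0,1},…,D_{6m-1,1}, T)`. -/
def U1fam (b : ℕ) {m : ℕ} (φ : SatInstance m) :
    Option (Fin (6 * m) ⊕ Fin m × Fin 3) → TS (ℕ × ℕ) Ev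
  | none => H1 b
  | some (.inl j) => D1 b (j : ℕ)
  | some (.inr q) => Tgad b (6 * m + 1 + 3 * (q.1 : ℕ) + (q.2 : ℕ)) φ q.1 q.2

def U1 (b : ℕ) {m : ℕ} (φ : SatInstance m) : TS (ℕ × ℕ) Ev := TS.unionFam (U1fam b φ)

/-- The family of constituents of `W = U(H_2, D_{0,1},…,D_{6m-1,1}, T)`. -/
def Wfam (b : ℕ) {m : ℕ} (φ : SatInstance m) :
    Option (Fin (6 * m) ⊕ Fin m × Fin 3) → TS (ℕ × ℕ) Ev
  | none => H2 b
  | some (.inl j) => D1 b (j : ℕ)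
  | some (.inr q) => Tgad b (6 * m + 1 + 3 * (q.1 : ℕ) + (q.2 : ℕ)) φ q.1 q.2

def Wun (b : ℕ) {m : ℕ} (φ : SatInstance m) : TS (ℕ × ℕ) Ev := TS.unionFam (Wfam b φ)

/-- The family of constituents of
`U_τ = U(H_3, F_0, G_0, …, F_{m-1}, G_{m-1}, T_0, …, T_{m-1})` for `τ ∈ {τ^b_2, τ^b_3}`. -/
def U2fam (b : ℕ) {m : ℕ} (φ : SatInstance m) :
    Option (Fin m × Fin 3) → TS (ℕ × ℕ) Ev
  | none => H3 b
  | some q => Ttrans2fam b φ q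

def U2 (b : ℕ) {m : ℕ} (φ : SatInstance m) : TS (ℕ × ℕ) Ev := TS.unionFam (U2fam b φ)

/-! ## The joining `A(U)` -/

/-- The joining `A(U)` of a union `U = U(A_0,…,A_n)` of initialized TSs (`A_i`
initialized at `s0 i`): fresh connector states `q_i = Sum.inr i`, fresh events
`w_{i+1} = Sum.inr (Sum.inl i)` (`i : Fin n`) and `y_i = Sum.inr (Sum.inr i)`,
and transitions `q_i --w_{i+1}--> q_{i+1}` and `q_i --y_i--> s0 i`. -/
def joining {S E : Type} {n : ℕ} (F : Fin (n + 1) → TS S E) (s0 : Fin (n + 1) → S)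
    (h0 : ∀ i, s0 i ∈ (F i).states) :
    TS (S ⊕ Fin (n + 1)) (E ⊕ (Fin n ⊕ Fin (n + 1))) where
  states := {st | (∃ a ∈ (TS.unionFam F).states, st = Sum.inl a) ∨ ∃ q, st = Sum.inr q}
  events := {ev | (∃ e ∈ (TS.unionFam F).events, ev = Sum.inl e) ∨ ∃ c, ev = Sum.inr c}
  tr st ev st' :=
    (∃ a e a', (TS.unionFam F).tr a e a' ∧
        st = Sum.inl a ∧ ev = Sum.inl e ∧ st' = Sum.inl a') ∨
    (∃ i : Fin n, st = Sum.inr i.castSucc ∧ ev = Sum.inr (Sum.inl i) ∧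
        st' = Sum.inr i.succ) ∨
    (∃ i : Fin (n + 1), st = Sum.inr i ∧ ev = Sum.inr (Sum.inr i) ∧
        st' = Sum.inl (s0 i))
  tr_mem := by
    rintro st ev st' (⟨a, e, a', h, rfl, rfl, rfl⟩ | ⟨i, rfl, rfl, rfl⟩ | ⟨i, rfl, rfl, rfl⟩)
    · obtain ⟨h1, h2, h3⟩ := (TS.unionFam F).tr_mem h
      exact ⟨Or.inl ⟨a, h1, rfl⟩, Or.inl ⟨e, h2, rfl⟩, Or.inl ⟨a', h3, rfl⟩⟩
    · exact ⟨Or.inr ⟨_, rfl⟩, Or.inr ⟨_, rfl⟩, Or.inr ⟨_, rfl⟩⟩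
    · exact ⟨Or.inr ⟨_, rfl⟩, Or.inr ⟨_, rfl⟩,
        Or.inl ⟨_, Set.mem_iUnion.2 ⟨i, h0 i⟩, rfl⟩⟩
section Stmt12Aux

open Classical in
/-- membership of the natural `v` (as a variable index) in the model `M`. -/
def MPset (m : ℕ) (M : Set (Fin m)) (v : ℕ) : Prop :=
  ∃ h : v < m, (⟨v, h⟩ : Fin m) ∈ M

open Classical in
noncomputable def sigM (m : ℕ) (M : Set (Fin m)) : Ev → Tev
  | Ev.k => Tev.pr 0 1
  | Ev.X v => if MPset m M v then Tev.gr 1 else Tev.gr 0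
  | Ev.vj j => if MPset m M j then Tev.gr 0 else Tev.pr 0 1
  | _ => Tev.gr 0

open Classical in
noncomputable def cntM {m : ℕ} (φ : SatInstance m) (M : Set (Fin m)) (i r : ℕ) : ℕ :=
  if h : i < m then
    (if 1 ≤ r ∧ φ.C ⟨i, h⟩ 0 ∈ M then 1 else 0) +
    (if 2 ≤ r ∧ φ.C ⟨i, h⟩ 1 ∈ M then 1 else 0) +
    (if 3 ≤ r ∧ φ.C ⟨i, h⟩ 2 ∈ M then 1 else 0)
  else 0

open Classical in
noncomputable def supM (b : ℕ) {m : ℕ} (φ : SatInstance m) (M : Set (Fin m)) :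
    ℕ × ℕ → ℕ := fun st =>
  let tag := st.1; let pos := st.2
  if tag % 4 = 2 then min pos b
  else if tag % 4 = 3 then min (pos + (if MPset m M (tag / 4) then 0 else 1)) b
  else if tag % 4 = 0 then (if pos ≤ b then pos else if MPset m M (tag / 4 - 1) then 0 else b)
  else
    if pos ≤ b then pos
    else if b + 4 ≤ pos then min (pos - (b + 4)) b
    else (b + cntM φ M (tag / 4 - 1) (pos - b)) % (b + 1)

lemma getq_rep {E : Type} (n : ℕ) (a : E) (l : List E) (s : ℕ) :
    (List.replicate n a ++ l)[s]? = if s < n then some a else l[s - n]? := by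
  rw [List.getElem?_append]
  simp only [List.length_replicate, List.getElem?_replicate]
  split <;> simp [*]

lemma getq_cons {E : Type} (a : E) (l : List E) (s : ℕ) :
    (a :: l)[s]? = if s = 0 then some a else l[s-1]? := by
  cases s <;> simp

lemma resp_chain {b : ℕ} {w : List Ev} {f : ℕ → ℕ × ℕ} {sup : ℕ × ℕ → ℕ} {sig : Ev → Tev}
    {vals : ℕ → ℕ}
    (hf : ∀ i ≤ w.length, sup (f i) = vals i)
    (hstep : ∀ s e, w[s]? = some e → tevStep b (vals s) (sig e) = some (vals (s+1))) :
    ∀ ⦃s e s'⦄, ((TS.chain w).mapStates f).tr s e s' →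
      tevStep b (sup s) (sig e) = some (sup s') := by
  rintro s e s' ⟨a, a', ⟨hw, rfl⟩, rfl, rfl⟩
  have hlt : a < w.length := by
    by_contra hc
    rw [List.getElem?_eq_none (Nat.le_of_not_lt hc)] at hw
    cases hw
  rw [hf a (le_of_lt hlt), hf (a+1) hlt]
  exact hstep a _ hw

lemma mp_coe {m : ℕ} (M : Set (Fin m)) (v : Fin m) : MPset m M (↑v) ↔ v ∈ M := by
  constructor
  · rintro ⟨h, hm⟩; simpa using hm
  · intro h; exact ⟨v.isLt, by simpa using h⟩

end Stmt12Aux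

section Stmt12Aux2
open Classical

lemma step_k {b v : ℕ} (h : v + 1 ≤ b) : tevStep b v (Tev.pr 0 1) = some (v + 1) := by
  simp [tevStep]; omega

lemma step_gr {b v c : ℕ} : tevStep b v (Tev.gr c) = some ((v + c) % (b + 1)) := rfl

variable {m : ℕ} (b : ℕ) (φ : SatInstance m) (M : Set (Fin m))

lemma supF0 (j pos : ℕ) : supM b φ M (4 * j + 2, pos) = min pos b := by
  have h : (4 * j + 2) % 4 = 2 := by omega
  simp [supM, h]

lemma supF1 (j pos : ℕ) :
    supM b φ M (4 * j + 3, pos) = min (pos + (if MPset m M j then 0 else 1)) b := by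
  have h : (4 * j + 3) % 4 = 3 := by omega
  have h2 : (4 * j + 3) % 4 ≠ 2 := by omega
  have h3 : (4 * j + 3) / 4 = j := by omega
  simp [supM, h, h2, h3]

lemma supG (j pos : ℕ) :
    supM b φ M (4 * j + 4, pos)
      = if pos ≤ b then pos else if MPset m M j then 0 else b := by
  have h : (4 * j + 4) % 4 = 0 := by omega
  have h2 : (4 * j + 4) % 4 ≠ 2 := by omega
  have h3 : (4 * j + 4) % 4 ≠ 3 := by omega
  have h4 : (4 * j + 4) / 4 - 1 = j := by omega
  simp [supM, h, h2, h3, h4]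

lemma supT (i pos : ℕ) :
    supM b φ M (4 * i + 5, pos)
      = if pos ≤ b then pos
        else if b + 4 ≤ pos then min (pos - (b + 4)) b
        else (b + cntM φ M i (pos - b)) % (b + 1) := by
  have h1 : (4 * i + 5) % 4 ≠ 2 := by omega
  have h2 : (4 * i + 5) % 4 ≠ 3 := by omega
  have h3 : (4 * i + 5) % 4 ≠ 0 := by omega
  have h4 : (4 * i + 5) / 4 - 1 = i := by omega
  simp [supM, h1, h2, h3, h4]

lemma resp_Ggad (hb : 2 ≤ b) (j : Fin m) :
    ∀ ⦃s e s'⦄, (Ggad b ↑j).tr s e s' →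
      tevStep b (supM b φ M s) (sigM m M e) = some (supM b φ M s') := by
  apply resp_chain (vals := fun s => if s ≤ b then s else if MPset m M ↑j then 0 else b)
  · intro i hi
    rw [supG]
  · intro s e he
    rw [getq_rep, getq_cons] at he
    simp only [List.getElem?_nil] at he
    by_cases h1 : s < b
    · rw [if_pos h1] at he
      cases he
      simp only [sigM]
      rw [if_pos (by omega : s ≤ b), if_pos (by omega : s + 1 ≤ b)]
      exact step_k (by omega)
    · rw [if_neg h1] at he
      by_cases h2 : s - b = 0
      · rw [if_pos h2] at he
        cases he
        have hs : s = b := by omega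
        rw [hs]
        simp only [sigM]
        rw [if_pos (le_refl b), if_neg (by omega : ¬ b + 1 ≤ b)]
        by_cases hM : MPset m M (↑j : ℕ)
        · rw [if_pos hM, if_pos hM, step_gr, Nat.mod_self]
        · rw [if_neg hM, if_neg hM, step_gr, Nat.add_zero, Nat.mod_eq_of_lt (by omega)]
      · rw [if_neg h2] at he
        exact absurd he (by simp)

end Stmt12Aux2

section Stmt12Aux3
open Classical

variable {m : ℕ} (b : ℕ) (φ : SatInstance m) (M : Set (Fin m))

lemma resp_Fch0 (j : Fin m) :
    ∀ ⦃s e s'⦄, (Fch0 b ↑j).tr s e s' →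
      tevStep b (supM b φ M s) (sigM m M e) = some (supM b φ M s') := by
  apply resp_chain (vals := fun s => min s b)
  · intro i _; rw [supF0]
  · intro s e he
    rw [List.getElem?_replicate] at he
    by_cases h1 : s < b
    · rw [if_pos h1] at he
      cases he
      rw [Nat.min_eq_left (by omega), Nat.min_eq_left (by omega)]
      exact step_k (by omega)
    · rw [if_neg h1] at he; exact absurd he (by simp)

lemma resp_Fch1 (hb : 2 ≤ b) (j : Fin m) :
    ∀ ⦃s e s'⦄, (Fch1 b ↑j).tr s e s' →
      tevStep b (supM b φ M s) (sigM m M e) = some (supM b φ M s') := by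
  apply resp_chain (vals := fun s =>
    if s = 0 then 0 else if s = b + 1 then b
    else (s - 1 + if MPset m M ↑j then 0 else 1))
  · intro i hi
    simp only [List.length_append, List.length_replicate, List.length_cons,
      List.length_nil] at hi
    by_cases h0 : i = 0
    · subst h0
      rw [if_pos rfl, if_pos rfl, supF0]
      omega
    · rw [if_neg h0]
      by_cases h1 : i = b + 1
      · subst h1
        rw [if_neg (show b + 1 ≠ 0 by omega), if_pos rfl, if_pos rfl, supF0]
        omega
      · rw [if_neg h1, if_neg h0, if_neg h1, supF1]
        rw [Nat.min_eq_left (by split <;> omega)]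
  · intro s e he
    have hw : ([Ev.vj (↑j : ℕ)] ++ List.replicate (b-1) Ev.k ++ [Ev.X ↑j])
        = Ev.vj (↑j : ℕ) :: (List.replicate (b-1) Ev.k ++ [Ev.X ↑j]) := by simp
    rw [hw, getq_cons] at he
    by_cases h0 : s = 0
    · rw [if_pos h0] at he
      cases he
      subst h0
      rw [if_pos rfl, if_neg (show (1:ℕ) ≠ 0 by omega),
        if_neg (show (1:ℕ) ≠ b + 1 by omega)]
      simp only [sigM]
      by_cases hM : MPset m M (↑j : ℕ)
      · rw [if_pos hM, if_pos hM]
        refine step_gr.trans (congrArg some ?_)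
        simp
      · rw [if_neg hM, if_neg hM]
        exact (step_k (by omega)).trans (congrArg some (by omega))
    · rw [if_neg h0, getq_rep] at he
      by_cases h1 : s - 1 < b - 1
      · rw [if_pos h1] at he
        cases he
        rw [if_neg h0, if_neg (show s ≠ b + 1 by omega),
          if_neg (show s + 1 ≠ 0 by omega), if_neg (show s + 1 ≠ b + 1 by omega)]
        by_cases hM : MPset m M (↑j : ℕ)
        · rw [if_pos hM]
          exact (step_k (by omega)).trans (congrArg some (by omega))
        · rw [if_neg hM]
          exact (step_k (by omega)).trans (congrArg some (by omega))
      · rw [if_neg h1, getq_cons] at he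
        by_cases h2 : s - 1 - (b - 1) = 0
        · rw [if_pos h2] at he
          cases he
          have hs : s = b := by omega
          rw [hs]
          rw [if_neg (show b ≠ 0 by omega), if_neg (show b ≠ b + 1 by omega),
            if_pos rfl]
          simp only [sigM]
          by_cases hM : MPset m M (↑j : ℕ)
          · rw [if_pos hM, if_pos hM]
            refine step_gr.trans (congrArg some ?_)
            rw [Nat.add_zero, show b - 1 + 1 = b by omega,
              Nat.mod_eq_of_lt (by omega)]
            simp
          · rw [if_neg hM, if_neg hM]
            refine step_gr.trans (congrArg some ?_)
            rw [Nat.add_zero, show b - 1 + 1 = b by omega,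
              Nat.mod_eq_of_lt (by omega)]
            simp
        · rw [if_neg h2] at he
          exact absurd he (by simp)

lemma resp_Fgad (hb : 2 ≤ b) (j : Fin m) :
    ∀ ⦃s e s'⦄, (Fgad b ↑j).tr s e s' →
      tevStep b (supM b φ M s) (sigM m M e) = some (supM b φ M s') := by
  rintro s e s' ⟨c, htr⟩
  cases c
  · simp only [Bool.false_eq_true, if_neg] at htr
    exact resp_Fch1 b φ M hb j htr
  · simp only [if_pos] at htr
    exact resp_Fch0 b φ M j htr

lemma resp_Tgad2 (hb : 2 ≤ b) (hMod : φ.model M) (i : Fin m) :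
    ∀ ⦃s e s'⦄, (Tgad2 b φ i).tr s e s' →
      tevStep b (supM b φ M s) (sigM m M e) = some (supM b φ M s') := by
  have key : (if φ.C i 0 ∈ M then 1 else 0) + (if φ.C i 1 ∈ M then 1 else 0) +
      (if φ.C i 2 ∈ M then 1 else 0) = 1 := by
    obtain ⟨r, hr, hu⟩ := hMod i
    fin_cases r
    · have h0 : φ.C i 0 ∈ M := by simpa using hr
      have h1 : ¬ φ.C i 1 ∈ M := fun h => by simpa using hu 1 h
      have h2 : ¬ φ.C i 2 ∈ M := fun h => by simpa using hu 2 h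
      simp [h0, h1, h2]
    · have h0 : φ.C i 1 ∈ M := by simpa using hr
      have h1 : ¬ φ.C i 0 ∈ M := fun h => by simpa using hu 0 h
      have h2 : ¬ φ.C i 2 ∈ M := fun h => by simpa using hu 2 h
      simp [h0, h1, h2]
    · have h0 : φ.C i 2 ∈ M := by simpa using hr
      have h1 : ¬ φ.C i 0 ∈ M := fun h => by simpa using hu 0 h
      have h2 : ¬ φ.C i 1 ∈ M := fun h => by simpa using hu 1 h
      simp [h0, h1, h2]
  have c1 : cntM φ M ↑i 1 = (if φ.C i 0 ∈ M then 1 else 0) := by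
    simp [cntM, i.isLt]
  have c2 : cntM φ M ↑i 2
      = (if φ.C i 0 ∈ M then 1 else 0) + (if φ.C i 1 ∈ M then 1 else 0) := by
    simp [cntM, i.isLt]
  have c3 : cntM φ M ↑i 3 = 1 := by
    simp only [cntM, i.isLt, dif_pos, Fin.eta]
    simpa using key
  apply resp_chain (vals := fun pos => supM b φ M (4 * ↑i + 5, pos))
  · intro p _; rfl
  · intro s e he
    have hw : (List.replicate b Ev.k ++
        [Ev.X ((φ.C i 0 : Fin m) : ℕ), Ev.X ((φ.C i 1 : Fin m) : ℕ),
         Ev.X ((φ.C i 2 : Fin m) : ℕ), Ev.z] ++ List.replicate b Ev.k)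
        = List.replicate b Ev.k ++
          (Ev.X ((φ.C i 0 : Fin m) : ℕ) :: Ev.X ((φ.C i 1 : Fin m) : ℕ) ::
           Ev.X ((φ.C i 2 : Fin m) : ℕ) :: Ev.z :: List.replicate b Ev.k) := by simp
    rw [hw, getq_rep] at he
    rw [supT, supT]
    by_cases hA : s < b
    · rw [if_pos hA] at he
      cases he
      rw [if_pos (show s ≤ b by omega), if_pos (show s + 1 ≤ b by omega)]
      exact step_k (by omega)
    · rw [if_neg hA, getq_cons] at he
      by_cases hB : s - b = 0
      · -- s = b, event X (C i 0)
        rw [if_pos hB] at he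
        cases he
        have hs : s = b := by omega
        rw [hs]
        rw [if_pos (le_refl b), if_neg (show ¬ b + 1 ≤ b by omega),
          if_neg (show ¬ b + 4 ≤ b + 1 by omega)]
        rw [show b + 1 - b = 1 by omega, c1]
        simp only [sigM]
        rw [mp_coe]
        by_cases hM : φ.C i 0 ∈ M
        · rw [if_pos hM, if_pos hM]; exact step_gr
        · rw [if_neg hM, if_neg hM]; exact step_gr
      · rw [if_neg hB, getq_cons] at he
        by_cases hC : s - b - 1 = 0
        · -- s = b + 1, event X (C i 1)
          rw [if_pos hC] at he
          cases he
          have hs : s = b + 1 := by omega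
          rw [hs]
          rw [if_neg (show ¬ b + 1 ≤ b by omega), if_neg (show ¬ b + 4 ≤ b + 1 by omega),
            if_neg (show ¬ b + 1 + 1 ≤ b by omega),
            if_neg (show ¬ b + 4 ≤ b + 1 + 1 by omega)]
          rw [show b + 1 - b = 1 by omega, show b + 1 + 1 - b = 2 by omega, c1, c2]
          simp only [sigM]
          rw [mp_coe]
          by_cases hM : φ.C i 1 ∈ M
          · simp only [if_pos hM]
            refine step_gr.trans (congrArg some ?_)
            rw [Nat.mod_add_mod]
            refine congrArg (· % (b + 1)) ?_
            omega
          · simp only [if_neg hM]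
            refine step_gr.trans (congrArg some ?_)
            rw [Nat.mod_add_mod]
            refine congrArg (· % (b + 1)) ?_
            omega
        · rw [if_neg hC, getq_cons] at he
          by_cases hD : s - b - 1 - 1 = 0
          · -- s = b + 2, event X (C i 2)
            rw [if_pos hD] at he
            cases he
            have hs : s = b + 2 := by omega
            rw [hs]
            rw [if_neg (show ¬ b + 2 ≤ b by omega), if_neg (show ¬ b + 4 ≤ b + 2 by omega),
              if_neg (show ¬ b + 2 + 1 ≤ b by omega),
              if_neg (show ¬ b + 4 ≤ b + 2 + 1 by omega)]
            rw [show b + 2 - b = 2 by omega, show b + 2 + 1 - b = 3 by omega, c2, c3]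
            simp only [sigM]
            rw [mp_coe]
            by_cases hM : φ.C i 2 ∈ M
            · simp only [if_pos hM] at key ⊢
              refine step_gr.trans (congrArg some ?_)
              rw [Nat.mod_add_mod]
              refine congrArg (· % (b + 1)) ?_
              omega
            · simp only [if_neg hM] at key ⊢
              refine step_gr.trans (congrArg some ?_)
              rw [Nat.mod_add_mod]
              refine congrArg (· % (b + 1)) ?_
              omega
          · rw [if_neg hD, getq_cons] at he
            by_cases hE : s - b - 1 - 1 - 1 = 0
            · -- s = b + 3, event z
              rw [if_pos hE] at he
              cases he
              have hs : s = b + 3 := by omega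
              rw [hs]
              rw [if_neg (show ¬ b + 3 ≤ b by omega), if_neg (show ¬ b + 4 ≤ b + 3 by omega),
                if_neg (show ¬ b + 3 + 1 ≤ b by omega),
                if_pos (show b + 4 ≤ b + 3 + 1 by omega)]
              rw [show b + 3 - b = 3 by omega, c3]
              refine step_gr.trans (congrArg some ?_)
              rw [Nat.mod_add_mod, Nat.add_zero, Nat.mod_self]
              omega
            · rw [if_neg hE, List.getElem?_replicate] at he
              by_cases hF : s - b - 1 - 1 - 1 - 1 < b
              · -- b + 4 ≤ s < 2b + 4, event k
                rw [if_pos hF] at he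
                cases he
                rw [if_neg (show ¬ s ≤ b by omega), if_pos (show b + 4 ≤ s by omega),
                  if_neg (show ¬ s + 1 ≤ b by omega), if_pos (show b + 4 ≤ s + 1 by omega)]
                rw [Nat.min_eq_left (by omega), Nat.min_eq_left (by omega)]
                exact (step_k (by omega)).trans (congrArg some (by omega))
              · rw [if_neg hF] at he
                exact absurd he (by simp)

end Stmt12Aux3

section Stmt12Aux4
open Classical

variable {m : ℕ} (b : ℕ) (φ : SatInstance m) (M : Set (Fin m))

lemma supM_le (st : ℕ × ℕ) : supM b φ M st ≤ b := by
  obtain ⟨tag, pos⟩ := st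
  simp only [supM]
  split_ifs <;>
    first
      | omega
      | exact Nat.min_le_right _ _
      | exact Nat.le_of_lt_succ (Nat.mod_lt _ (by omega))

lemma sigM_ok (t : ℕ) (hb : 2 ≤ b) (ht : t = 2 ∨ t = 3) (e : Ev) :
    tevOk b t (sigM m M e) := by
  have hgr0 : tevOk b t (Tev.gr 0) := ⟨by omega, ht⟩
  have hgr1 : tevOk b t (Tev.gr 1) := ⟨by omega, ht⟩
  have hpr : tevOk b t (Tev.pr 0 1) :=
    ⟨by omega, by omega, fun _ => Or.inl rfl, fun _ h => by omega⟩
  cases e <;> simp only [sigM] <;> try exact hgr0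
  · exact hpr
  · split <;> [exact hgr0; exact hpr]
  · split <;> [exact hgr1; exact hgr0]

end Stmt12Aux4

/-- Existence for the translator `T_τ`, `τ ∈ {τ^b_2, τ^b_3}`:
if `φ` has a one-in-three model, then some `τ`-region of `T_τ` satisfies
`sig(z) = 0` (the group event `0`) and `sig(k) = (0,1)`. -/
theorem stmt12 (b t : ℕ) (hb : 2 ≤ b) (ht : t = 2 ∨ t = 3)
    {m : ℕ} (hm : 1 ≤ m) (φ : SatInstance m)
    (hmod : ∃ M : Set (Fin m), φ.model M) :
    ∃ R : Region b t (Ttrans2 b φ), R.sig Ev.z = Tev.gr 0 ∧ R.sig Ev.k = Tev.pr 0 1 := by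
  classical
  obtain ⟨M, hM⟩ := hmod
  refine ⟨⟨supM b φ M, sigM m M, fun s _ => supM_le b φ M s,
    fun e _ => sigM_ok b M t hb ht e, ?_⟩, rfl, rfl⟩
  rintro s e s' ⟨⟨i, a⟩, htr⟩
  by_cases h0 : a = 0
  · simp only [Ttrans2fam, h0, if_pos rfl] at htr
    exact resp_Fgad b φ M hb i htr
  · by_cases h1 : a = 1
    · simp only [Ttrans2fam, h0, h1, if_neg, if_pos rfl, reduceIte] at htr
      exact resp_Ggad b φ M hb i htr
    · simp only [Ttrans2fam, h0, h1, reduceIte] at htr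
      exact resp_Tgad2 b φ M hb hM i htr
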